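/- Let Γ be a Shilla distance-regular graph with b = b(Γ). Then c₂ divides (b-1)·a₃·b₂. -/

import Mathlib

open Finset SimpleGraph

/-- `G` is a distance-regular graph with diameter `D` and intersection numbers
`b i`, `c i`, `a i` (so valency `k = b 0` and `a i = k - b i - c i`). -/
structure IsDRG {V : Type*} [Fintype V] (G : SimpleGraph V) (D : ℕ)
    (b c a : ℕ → ℕ) : Prop where
  connected : G.Connected
  le_diam : ∀ x y : V, G.dist x y ≤ D
  exists_diam : ∃ x y : V, G.dist x y = D
  card_b : ∀ i, i ≤ D → ∀ x y : V, G.dist x y = i →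
      Nat.card {z : V | G.Adj y z ∧ G.dist x z = i + 1} = b i
  card_c : ∀ i, i ≤ D → ∀ x y : V, G.dist x y = i →
      Nat.card {z : V | G.Adj y z ∧ G.dist x z = i - 1} = c i
  card_a : ∀ i, i ≤ D → ∀ x y : V, G.dist x y = i →
      Nat.card {z : V | G.Adj y z ∧ G.dist x z = i} = a i

/-- `θ` is an eigenvalue of the adjacency matrix of `G`. -/
def IsEig {V : Type*} [Fintype V] [DecidableEq V] (G : SimpleGraph V)
    [DecidableRel G.Adj] (θ : ℝ) : Prop :=
  ∃ v : V → ℝ, v ≠ 0 ∧ (G.adjMatrix ℝ).mulVec v = θ • v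

/-- `θ` is the second largest eigenvalue of `G` (`k` being the largest). -/
def IsSecondLargestEig {V : Type*} [Fintype V] [DecidableEq V] (G : SimpleGraph V)
    [DecidableRel G.Adj] (k θ : ℝ) : Prop :=
  IsEig G θ ∧ θ < k ∧ ∀ η : ℝ, IsEig G η → η ≠ k → η ≤ θ

/-- `θ` is the smallest eigenvalue of `G`. -/
def IsSmallestEig {V : Type*} [Fintype V] [DecidableEq V] (G : SimpleGraph V)
    [DecidableRel G.Adj] (θ : ℝ) : Prop :=
  IsEig G θ ∧ ∀ η : ℝ, IsEig G η → θ ≤ η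

/-- The multiplicity of `θ` as an eigenvalue of the adjacency matrix of `G`. -/
noncomputable def eigMult {V : Type*} [Fintype V] [DecidableEq V] (G : SimpleGraph V)
    [DecidableRel G.Adj] (θ : ℝ) : ℕ :=
  Module.finrank ℝ ↥(Module.End.eigenspace (Matrix.toLin' (G.adjMatrix ℝ)) θ)

/-- A Shilla distance-regular graph: diameter `3` and second largest eigenvalue `a 3`. -/
structure IsShilla {V : Type*} [Fintype V] [DecidableEq V] (G : SimpleGraph V)
    [DecidableRel G.Adj] (b c a : ℕ → ℕ) : Prop where
  drg : IsDRG G 3 b c a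
  second : IsSecondLargestEig G (b 0) ((a 3 : ℝ))


set_option linter.unusedSectionVars false

namespace Stmt9Aux

section Aux
variable {V : Type*} [Fintype V]

lemma filter_card_of (n : ℕ) {P Q : V → Prop} [DecidablePred P]
    (h : Nat.card {z | Q z} = n) (e : ∀ z, P z ↔ Q z) :
    (Finset.univ.filter P).card = n := by
  have hs : {z | Q z} = {z | P z} := by ext z; exact (e z).symm
  rw [hs, Nat.card_coe_set_eq, Set.ncard_eq_toFinset_card', Set.toFinset_setOf] at h
  exact h

lemma fubini (P : V → V → Prop) [∀ z w, Decidable (P z w)] :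
    ∑ z, (Finset.univ.filter fun w => P z w).card
      = ∑ w, (Finset.univ.filter fun z => P z w).card := by
  simp_rw [Finset.card_filter]
  exact Finset.sum_comm

lemma sum_ite_card (p : V → Prop) [DecidablePred p] (n : ℕ) :
    ∑ w, (if p w then n else 0) = (Finset.univ.filter p).card * n := by
  rw [← Finset.sum_filter, Finset.sum_const, smul_eq_mul]

end Aux


set_option maxHeartbeats 1600000

section M
variable {V : Type*} [Fintype V] [DecidableEq V] {G : SimpleGraph V} [DecidableRel G.Adj]
  {b c a : ℕ → ℕ}

lemma deg_eq (hG : IsDRG G 3 b c a) (y : V) :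
    (Finset.univ.filter (G.Adj y)).card = b 0 := by
  refine filter_card_of _ (hG.card_b 0 (by norm_num) y y (by simp)) fun z => ?_
  exact ⟨fun h => ⟨h, dist_eq_one_iff_adj.mpr h⟩, fun h => h.1⟩

lemma common1 (hG : IsDRG G 3 b c a) {y w : V} (h : G.dist y w = 1) :
    (Finset.univ.filter fun z => G.Adj y z ∧ G.Adj z w).card = a 1 := by
  refine filter_card_of _ (hG.card_a 1 (by norm_num) y w h) fun z => ?_
  constructor
  · intro ⟨h1, h2⟩; exact ⟨h2.symm, dist_eq_one_iff_adj.mpr h1⟩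
  · intro ⟨h1, h2⟩; exact ⟨dist_eq_one_iff_adj.mp h2, h1.symm⟩

lemma common2 (hG : IsDRG G 3 b c a) {y w : V} (h : G.dist y w = 2) :
    (Finset.univ.filter fun z => G.Adj y z ∧ G.Adj z w).card = c 2 := by
  refine filter_card_of _ (hG.card_c 2 (by norm_num) y w h) fun z => ?_
  constructor
  · intro ⟨h1, h2⟩; exact ⟨h2.symm, dist_eq_one_iff_adj.mpr h1⟩
  · intro ⟨h1, h2⟩; exact ⟨dist_eq_one_iff_adj.mp h2, h1.symm⟩

lemma out2 (hG : IsDRG G 3 b c a) {x z : V} (h : G.dist x z = 2) :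
    (Finset.univ.filter fun w => G.Adj z w ∧ G.dist x w = 3).card = b 2 :=
  filter_card_of _ (hG.card_b 2 (by norm_num) x z h) fun w => Iff.rfl

lemma out3 (hG : IsDRG G 3 b c a) {x z : V} (h : G.dist x z = 3) :
    (Finset.univ.filter fun w => G.Adj z w ∧ G.dist x w = 3).card = a 3 :=
  filter_card_of _ (hG.card_a 3 (by norm_num) x z h) fun w => Iff.rfl

lemma in3 (hG : IsDRG G 3 b c a) {x y : V} (h : G.dist x y = 3) :
    (Finset.univ.filter fun z => G.Adj y z ∧ G.dist x z = 2).card = c 3 :=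
  filter_card_of _ (hG.card_c 3 (by norm_num) x y h) fun z => Iff.rfl

lemma dist_le_succ (hG : IsDRG G 3 b c a) {x z w : V} (hzw : G.Adj z w) :
    G.dist x w ≤ G.dist x z + 1 := by
  have := hG.connected.dist_triangle (u := x) (v := z) (w := w)
  rwa [dist_eq_one_iff_adj.mpr hzw] at this

lemma count_main (hG : IsDRG G 3 b c a) (hk : b 0 + a 1 * a 3 = a 3 * a 3) :
    c 2 ∣ c 3 * b 2 := by
  classical
  obtain ⟨x, y, hd⟩ := hG.exists_diam
  -- dist facts for neighbours of y
  have hz23 : ∀ z : V, G.Adj y z → G.dist x z = 2 ∨ G.dist x z = 3 := by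
    intro z hz
    have h1 := hG.le_diam x z
    have h3 := hG.connected.dist_triangle (u := x) (v := z) (w := y)
    rw [dist_eq_one_iff_adj.mpr hz.symm] at h3
    omega
  set S := ∑ z, (Finset.univ.filter fun w =>
      G.Adj y z ∧ G.Adj z w ∧ G.dist x w = 3 ∧ G.dist y w = 2).card with hS
  -- w-side: S = W.card * c 2
  have hSw : S = (Finset.univ.filter fun w : V =>
      G.dist x w = 3 ∧ G.dist y w = 2).card * c 2 := by
    rw [hS, fubini]
    rw [← sum_ite_card (fun w : V => G.dist x w = 3 ∧ G.dist y w = 2) (c 2)]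
    refine Finset.sum_congr rfl fun w _ => ?_
    by_cases hw : G.dist x w = 3 ∧ G.dist y w = 2
    · rw [if_pos hw, ← common2 hG hw.2]
      congr 1
      ext z
      simp only [Finset.mem_filter, Finset.mem_univ, true_and, hw.1, hw.2, and_true]
    · rw [if_neg hw, Finset.card_eq_zero, Finset.filter_eq_empty_iff]
      intro z _ h
      exact hw ⟨h.2.2.1, h.2.2.2⟩
  -- z-side split
  have hsplit : ∀ z : V,
      (Finset.univ.filter fun w => G.Adj y z ∧ G.Adj z w ∧ G.dist x w = 3).card
        = (Finset.univ.filter fun w =>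
            G.Adj y z ∧ G.Adj z w ∧ G.dist x w = 3 ∧ G.dist y w = 2).card
        + (Finset.univ.filter fun w =>
            G.Adj y z ∧ G.Adj z w ∧ G.dist x w = 3 ∧ G.dist y w = 1).card
        + (if G.Adj y z then 1 else 0) := by
    intro z
    by_cases hz : G.Adj y z
    · rw [if_pos hz]
      have e1 := Finset.card_filter_add_card_filter_not
        (s := Finset.univ.filter fun w => G.Adj y z ∧ G.Adj z w ∧ G.dist x w = 3)
        (p := fun w => G.dist y w = 2)
      rw [Finset.filter_filter, Finset.filter_filter] at e1
      have e2 := Finset.card_filter_add_card_filter_not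
        (s := Finset.univ.filter fun w =>
          (G.Adj y z ∧ G.Adj z w ∧ G.dist x w = 3) ∧ ¬ G.dist y w = 2)
        (p := fun w => G.dist y w = 1)
      rw [Finset.filter_filter, Finset.filter_filter] at e2
      have hy1 : G.dist y z = 1 := dist_eq_one_iff_adj.mpr hz
      have e3 : (Finset.univ.filter fun w =>
          ((G.Adj y z ∧ G.Adj z w ∧ G.dist x w = 3) ∧ ¬ G.dist y w = 2)
            ∧ ¬ G.dist y w = 1) = {y} := by
        ext w
        simp only [Finset.mem_filter, Finset.mem_univ, true_and, Finset.mem_singleton]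
        constructor
        · rintro ⟨⟨⟨-, hzw, -⟩, h2⟩, h1⟩
          have hle : G.dist y w ≤ 2 := by
            have := dist_le_succ hG (x := y) hzw
            omega
          have h0 : G.dist y w = 0 := by omega
          exact (hG.connected.dist_eq_zero_iff.mp h0).symm
        · rintro rfl
          refine ⟨⟨⟨hz, hz.symm, hd⟩, ?_⟩, ?_⟩ <;> simp [SimpleGraph.dist_self]
      rw [e3, Finset.card_singleton] at e2
      have c1 : ∀ w : V, ((G.Adj y z ∧ G.Adj z w ∧ G.dist x w = 3) ∧ G.dist y w = 2)
          ↔ (G.Adj y z ∧ G.Adj z w ∧ G.dist x w = 3 ∧ G.dist y w = 2) := by tauto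
      have c2' : ∀ w : V, (((G.Adj y z ∧ G.Adj z w ∧ G.dist x w = 3) ∧ ¬ G.dist y w = 2)
          ∧ G.dist y w = 1)
          ↔ (G.Adj y z ∧ G.Adj z w ∧ G.dist x w = 3 ∧ G.dist y w = 1) := by
        intro w
        constructor
        · rintro ⟨⟨⟨u1, u2, u3⟩, -⟩, u4⟩; exact ⟨u1, u2, u3, u4⟩
        · rintro ⟨u1, u2, u3, u4⟩; exact ⟨⟨⟨u1, u2, u3⟩, by omega⟩, u4⟩
      rw [Finset.filter_congr (fun w _ => c1 w)] at e1
      rw [Finset.filter_congr (fun w _ => c2' w)] at e2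
      omega
    · rw [if_neg hz]
      have hempty : ∀ (p : V → Prop) [DecidablePred p],
          (Finset.univ.filter fun w => G.Adj y z ∧ p w).card = 0 := by
        intro p _
        rw [Finset.card_eq_zero, Finset.filter_eq_empty_iff]
        exact fun w _ h => hz h.1
      rw [hempty, hempty, hempty]
  -- sum of the G-side
  have hsumG : ∑ z, (Finset.univ.filter fun w =>
      G.Adj y z ∧ G.Adj z w ∧ G.dist x w = 3).card = c 3 * b 2 + a 3 * a 3 := by
    have per : ∀ z : V, (Finset.univ.filter fun w =>
        G.Adj y z ∧ G.Adj z w ∧ G.dist x w = 3).card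
        = (if G.Adj y z ∧ G.dist x z = 2 then b 2 else 0)
          + (if G.Adj y z ∧ G.dist x z = 3 then a 3 else 0) := by
      intro z
      by_cases hz : G.Adj y z
      · rcases hz23 z hz with h2 | h2
        · rw [if_pos ⟨hz, h2⟩, if_neg (by rintro ⟨-, h3⟩; omega), ← out2 hG h2, add_zero]
          congr 1; ext w
          simp only [Finset.mem_filter, Finset.mem_univ, true_and, hz, true_and]
        · rw [if_neg (by rintro ⟨-, h3⟩; omega), if_pos ⟨hz, h2⟩, ← out3 hG h2, zero_add]
          congr 1; ext w
          simp only [Finset.mem_filter, Finset.mem_univ, true_and, hz, true_and]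
      · rw [if_neg (fun h => hz h.1), if_neg (fun h => hz h.1)]
        simp only [add_zero, Finset.card_eq_zero, Finset.filter_eq_empty_iff]
        exact fun w _ h => hz h.1
    rw [Finset.sum_congr rfl fun z _ => per z, Finset.sum_add_distrib,
      sum_ite_card, sum_ite_card, in3 hG hd,
      filter_card_of (a 3) (hG.card_a 3 (by norm_num) x y hd) (fun z => Iff.rfl)]
  -- sum of the H-side
  have hsumH : ∑ z, (Finset.univ.filter fun w =>
      G.Adj y z ∧ G.Adj z w ∧ G.dist x w = 3 ∧ G.dist y w = 1).card = a 3 * a 1 := by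
    rw [fubini]
    have per : ∀ w : V, (Finset.univ.filter fun z =>
        G.Adj y z ∧ G.Adj z w ∧ G.dist x w = 3 ∧ G.dist y w = 1).card
        = if G.Adj y w ∧ G.dist x w = 3 then a 1 else 0 := by
      intro w
      by_cases hw : G.Adj y w ∧ G.dist x w = 3
      · rw [if_pos hw, ← common1 hG (dist_eq_one_iff_adj.mpr hw.1)]
        congr 1; ext z
        simp only [Finset.mem_filter, Finset.mem_univ, true_and, hw.1, hw.2,
          dist_eq_one_iff_adj.mpr hw.1, and_true]
      · rw [if_neg hw, Finset.card_eq_zero, Finset.filter_eq_empty_iff]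
        intro z _ h
        exact hw ⟨dist_eq_one_iff_adj.mp h.2.2.2, h.2.2.1⟩
    rw [Finset.sum_congr rfl fun w _ => per w, sum_ite_card,
      filter_card_of (a 3) (hG.card_a 3 (by norm_num) x y hd)
        (fun w => Iff.rfl)]
  -- degree sum
  have hsum1 : ∑ z : V, (if G.Adj y z then 1 else 0) = b 0 := by
    rw [sum_ite_card, mul_one, deg_eq hG y]
  -- combine
  have hcomb : c 3 * b 2 + a 3 * a 3 = S + a 3 * a 1 + b 0 := by
    rw [← hsumG, ← hsumH, ← hsum1, hS]
    rw [Finset.sum_congr rfl fun z _ => hsplit z]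
    rw [Finset.sum_add_distrib, Finset.sum_add_distrib]
  have hSval : S = c 3 * b 2 := by
    have h1 : a 3 * a 1 = a 1 * a 3 := mul_comm _ _
    omega
  exact Dvd.intro _ (by rw [← hSval, hSw, mul_comm])


lemma k_eq (hG : IsDRG G 3 b c a) (heig : IsEig G ((a 3 : ℝ))) (hb2 : 0 < b 2) :
    b 0 + a 1 * a 3 = a 3 * a 3 := by
  classical
  obtain ⟨v, hv0, hv⟩ := heig
  set θ : ℝ := (a 3 : ℝ) with hθ
  set A : Matrix V V ℝ := G.adjMatrix ℝ with hA
  set A2 : Matrix V V ℝ := Matrix.of fun x y => if G.dist x y = 2 then 1 else 0 with hA2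
  set A3 : Matrix V V ℝ := Matrix.of fun x y => if G.dist x y = 3 then 1 else 0 with hA3
  have hconn := hG.connected
  -- generic entry computation
  have entry3 : ∀ x y : V, (A3 * A) x y
      = ((Finset.univ.filter fun z => G.Adj y z ∧ G.dist x z = 3).card : ℝ) := by
    intro x y
    rw [Matrix.mul_apply, Finset.card_filter]
    push_cast
    refine Finset.sum_congr rfl fun z _ => ?_
    by_cases h1 : G.dist x z = 3 <;> by_cases h2 : G.Adj z y <;>
      simp [hA, hA3, h1, h2, adj_comm]
  have entry1 : ∀ x y : V, (A * A) x y
      = ((Finset.univ.filter fun z => G.Adj x z ∧ G.Adj z y).card : ℝ) := by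
    intro x y
    rw [Matrix.mul_apply, Finset.card_filter]
    push_cast
    refine Finset.sum_congr rfl fun z _ => ?_
    by_cases h1 : G.Adj x z <;> by_cases h2 : G.Adj z y <;> simp [hA, h1, h2]
  have I2 : A3 * A = (b 2 : ℝ) • A2 + (a 3 : ℝ) • A3 := by
    ext x y
    rw [entry3 x y]
    have hd : G.dist x y = 0 ∨ G.dist x y = 1 ∨ G.dist x y = 2 ∨ G.dist x y = 3 := by
      have := hG.le_diam x y; omega
    rcases hd with hd | hd | hd | hd
    · have hxy : x = y := (hconn.dist_eq_zero_iff).mp hd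
      have : (Finset.univ.filter fun z => G.Adj y z ∧ G.dist x z = 3).card = 0 := by
        rw [Finset.card_eq_zero, Finset.filter_eq_empty_iff]
        intro z _ ⟨h1, h2⟩
        have h3 := dist_eq_one_iff_adj.mpr h1
        rw [hxy] at h2
        omega
      simp [this, hA2, hA3, hd]
    · have : (Finset.univ.filter fun z => G.Adj y z ∧ G.dist x z = 3).card = 0 := by
        rw [Finset.card_eq_zero, Finset.filter_eq_empty_iff]
        intro z _ ⟨h1, h2⟩
        have := dist_le_succ hG (x := x) h1
        omega
      simp [this, hA2, hA3, hd]
    · have := filter_card_of (b 2) (hG.card_b 2 (by norm_num) x y hd)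
        (P := fun z => G.Adj y z ∧ G.dist x z = 3) (fun z => Iff.rfl)
      simp [this, hA2, hA3, hd]
    · have := filter_card_of (a 3) (hG.card_a 3 (by norm_num) x y hd)
        (P := fun z => G.Adj y z ∧ G.dist x z = 3) (fun z => Iff.rfl)
      simp [this, hA2, hA3, hd]
  have I1 : A * A = (b 0 : ℝ) • (1 : Matrix V V ℝ) + (a 1 : ℝ) • A + (c 2 : ℝ) • A2 := by
    ext x y
    rw [entry1 x y]
    have hd : G.dist x y = 0 ∨ G.dist x y = 1 ∨ G.dist x y = 2 ∨ G.dist x y = 3 := by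
      have := hG.le_diam x y; omega
    rcases hd with hd | hd | hd | hd
    · have hxy : x = y := (hconn.dist_eq_zero_iff).mp hd
      subst hxy
      have : (Finset.univ.filter fun z => G.Adj x z ∧ G.Adj z x).card = b 0 := by
        rw [← deg_eq hG x]
        congr 1
        ext z
        simp only [Finset.mem_filter, Finset.mem_univ, true_and]
        exact ⟨fun h => h.1, fun h => ⟨h, h.symm⟩⟩
      simp [this, hA, hA2, G.dist_self, G.irrefl]
    · have hadj : G.Adj x y := dist_eq_one_iff_adj.mp hd
      have hne : x ≠ y := hadj.ne
      have := common1 hG hd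
      simp [this, hA, hA2, hd, hadj, hne]
    · have hne : x ≠ y := by
        intro h; subst h; rw [SimpleGraph.dist_self] at hd; omega
      have hnadj : ¬ G.Adj x y := fun h => by
        rw [dist_eq_one_iff_adj.mpr h] at hd; omega
      have := common2 hG hd
      simp [this, hA, hA2, hd, hnadj, hne]
    · have hne : x ≠ y := by
        intro h; subst h; rw [SimpleGraph.dist_self] at hd; omega
      have hnadj : ¬ G.Adj x y := fun h => by
        rw [dist_eq_one_iff_adj.mpr h] at hd; omega
      have hcard : (Finset.univ.filter fun z => G.Adj x z ∧ G.Adj z y).card = 0 := by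
        rw [Finset.card_eq_zero, Finset.filter_eq_empty_iff]
        intro z _ ⟨h1, h2⟩
        have t1 : G.dist x z = 1 := dist_eq_one_iff_adj.mpr h1
        have t2 := dist_le_succ hG (x := x) h2
        omega
      simp [hcard, hA, hA2, hd, hnadj, hne]
  -- spectral argument
  have hA2v : A2.mulVec v = 0 := by
    have e1 : (A3 * A).mulVec v = θ • A3.mulVec v := by
      rw [← Matrix.mulVec_mulVec, hv, Matrix.mulVec_smul]
    rw [I2, Matrix.add_mulVec, Matrix.smul_mulVec, Matrix.smul_mulVec] at e1
    rw [hθ, add_eq_right] at e1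
    rcases smul_eq_zero.mp e1 with h | h
    · exact absurd h (Nat.cast_ne_zero.mpr hb2.ne')
    · exact h
  have key : θ * θ = (b 0 : ℝ) + (a 1 : ℝ) * θ := by
    have e2 : (A * A).mulVec v = θ • (θ • v) := by
      rw [← Matrix.mulVec_mulVec, hv, Matrix.mulVec_smul, hv]
    rw [I1, Matrix.add_mulVec, Matrix.add_mulVec, Matrix.smul_mulVec,
      Matrix.smul_mulVec, Matrix.smul_mulVec, Matrix.one_mulVec, hv, hA2v,
      smul_zero, add_zero] at e2
    have : (θ * θ - ((b 0 : ℝ) + (a 1 : ℝ) * θ)) • v = 0 := by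
      rw [sub_smul, sub_eq_zero, add_smul, mul_smul, mul_smul]
      exact e2.symm
    rcases smul_eq_zero.mp this with h | h
    · linarith [sub_eq_zero.mp h]
    · exact absurd h hv0
  have : (b 0 : ℝ) + (a 1 : ℝ) * (a 3 : ℝ) = (a 3 : ℝ) * (a 3 : ℝ) := by
    rw [hθ] at key; linarith
  exact_mod_cast this


lemma b2_pos (hG : IsDRG G 3 b c a) : 0 < b 2 := by
  classical
  obtain ⟨x, y, hd⟩ := hG.exists_diam
  obtain ⟨p, hp⟩ := hG.connected.exists_walk_length_eq_dist x y
  rw [hd] at hp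
  set z := p.getVert 2 with hz
  have hzy : G.Adj z y := by
    have := p.adj_getVert_succ (i := 2) (by omega)
    rwa [show (2 : ℕ) + 1 = 3 from rfl, show p.getVert 3 = y by
      rw [← hp]; exact p.getVert_length] at this
  have h1 : G.Adj x (p.getVert 1) := by
    have := p.adj_getVert_succ (i := 0) (by omega)
    rwa [p.getVert_zero] at this
  have h2 : G.Adj (p.getVert 1) z := p.adj_getVert_succ (i := 1) (by omega)
  have hle : G.dist x z ≤ 2 := by
    have t1 : G.dist x (p.getVert 1) = 1 := dist_eq_one_iff_adj.mpr h1
    have t2 := dist_le_succ hG (x := x) h2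
    omega
  have hge : G.dist x z = 2 := by
    have t3 := dist_le_succ hG (x := x) hzy
    omega
  rw [← out2 hG hge]
  rw [Finset.card_pos]
  exact ⟨y, by simp [hzy, hd]⟩

lemma partition3 (hG : IsDRG G 3 b c a) {x y : V} (hd : G.dist x y = 3) :
    c 3 + a 3 = b 0 := by
  classical
  have e1 := Finset.card_filter_add_card_filter_not
    (s := Finset.univ.filter (G.Adj y)) (p := fun z => G.dist x z = 2)
  rw [Finset.filter_filter, Finset.filter_filter] at e1
  have e2 : (Finset.univ.filter fun z => G.Adj y z ∧ ¬ G.dist x z = 2)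
      = Finset.univ.filter fun z => G.Adj y z ∧ G.dist x z = 3 := by
    refine Finset.filter_congr fun z _ => ?_
    constructor
    · rintro ⟨hz, h2⟩
      have h1 := hG.le_diam x z
      have h3 := hG.connected.dist_triangle (u := x) (v := z) (w := y)
      rw [dist_eq_one_iff_adj.mpr hz.symm] at h3
      exact ⟨hz, by omega⟩
    · rintro ⟨hz, h3⟩
      exact ⟨hz, by omega⟩
  rw [e2, in3 hG hd, deg_eq hG y,
    filter_card_of (a 3) (hG.card_a 3 (by norm_num) x y hd) (fun z => Iff.rfl)] at e1
  exact e1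

lemma assemble (hG : IsDRG G 3 b c a) (hk : b 0 + a 1 * a 3 = a 3 * a 3)
    (β : ℕ) (hβ2 : 2 ≤ β) (hβ : a 3 = a 1 + β) :
    c 3 = (β - 1) * a 3 := by
  obtain ⟨x, y, hd⟩ := hG.exists_diam
  have hpart := partition3 hG hd
  have hb0 : b 0 = β * a 3 := by
    have : a 3 * a 3 = a 1 * a 3 + β * a 3 := by
      rw [hβ, add_mul]
    omega
  obtain ⟨m, rfl⟩ : ∃ m, β = m + 1 := ⟨β - 1, by omega⟩
  have : (m + 1) * a 3 = m * a 3 + a 3 := by ring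
  simp only [Nat.add_sub_cancel]
  omega


end M

end Stmt9Aux

/-- For a Shilla distance-regular graph with `b = b(Γ)`, `c₂` divides `(b-1)·a₃·b₂`. -/
theorem stmt9 {V : Type*} [Fintype V] [DecidableEq V] (G : SimpleGraph V)
    [DecidableRel G.Adj] (b c a : ℕ → ℕ) (hG : IsShilla G b c a)
    (β : ℕ) (hβ2 : 2 ≤ β) (hβ : a 3 = a 1 + β) :
    c 2 ∣ (β - 1) * a 3 * b 2 := by
  obtain ⟨hdrg, hsec⟩ := hG
  have hb2 := Stmt9Aux.b2_pos hdrg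
  have hk := Stmt9Aux.k_eq hdrg hsec.1 hb2
  have hdvd := Stmt9Aux.count_main hdrg hk
  have hc3 := Stmt9Aux.assemble hdrg hk β hβ2 hβ
  rw [← hc3]
  exact hdvd
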